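/- Let C > 0 and let (q_n) be an increasing sequence of positive integers with q_{n+1} ≥ q_n + q_{n-1} (so q_n grows at least like the Fibonacci numbers). Let (d_n) be a nonnegative sequence with d_n → 0 satisfying the recursion d_{n-1} ≤ C(1 + M + d_n) q_n^{-1} + d_n for some M ≥ 0. Then d_n ≤ C(1 + M) Σ_{k=n}^∞ q_k^{-1} Π_{l=n}^{k-1} (1 + C q_l^{-1}), and this bound is finite. -/

import Mathlib

open Filter Finset

/-- **Recursive distance bound.** Let `C > 0`, `(q n)` an increasing sequence of
positive integers with `q (n+2) ≥ q (n+1) + q n` (Fibonacci-like growth), and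
`(d n)` a nonnegative null sequence satisfying
`d (n-1) ≤ C (1 + M + d n) / q n + d n` for some `M ≥ 0`. Then
`d n ≤ C (1+M) Σ_{k=n}^∞ q_k⁻¹ Π_{l=n}^{k-1} (1 + C q_l⁻¹)` and the bound is
finite (the series is summable). -/
theorem recursive_distance_bound
    (C M : ℝ) (hC : 0 < C) (hM : 0 ≤ M)
    (q : ℕ → ℕ) (hq_pos : ∀ n, 0 < q n) (hq_mono : StrictMono q)
    (hq_fib : ∀ n, q (n + 1) + q n ≤ q (n + 2))
    (d : ℕ → ℝ) (hd_nonneg : ∀ n, 0 ≤ d n)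
    (hd_lim : Tendsto d atTop (nhds 0))
    (hd_rec : ∀ n, d n ≤ C * (1 + M + d (n + 1)) * ((q (n + 1) : ℝ))⁻¹ + d (n + 1)) :
    ∀ n : ℕ,
      Summable (fun k : ℕ =>
        ((q (n + k) : ℝ))⁻¹ * ∏ l ∈ range k, (1 + C * ((q (n + l) : ℝ))⁻¹)) ∧
      d n ≤ C * (1 + M) *
        ∑' k : ℕ,
          ((q (n + k) : ℝ))⁻¹ * ∏ l ∈ range k, (1 + C * ((q (n + l) : ℝ))⁻¹) := by
  have hqR : ∀ m, (0:ℝ) < (q m : ℝ) := fun m => by exact_mod_cast hq_pos m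
  have hqinv_pos : ∀ m, (0:ℝ) < ((q m : ℝ))⁻¹ := fun m => inv_pos.mpr (hqR m)
  set f : ℕ → ℕ → ℝ := fun n k =>
    ((q (n + k) : ℝ))⁻¹ * ∏ l ∈ range k, (1 + C * ((q (n + l) : ℝ))⁻¹) with hf
  -- growth of q
  have hq2 : ∀ m, 2 * q m ≤ q (m + 2) := by
    intro m
    have h1 := hq_fib m
    have h2 := (hq_mono (show m < m+1 by omega)).le
    omega
  have hgrow : ∀ n k, 2 ^ (k / 2) * q n ≤ q (n + k) := by
    intro n k
    induction k using Nat.strong_induction_on with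
    | _ k ih =>
      match k with
      | 0 => simpa using Nat.le_refl _
      | 1 => simpa using (hq_mono (show n < n+1 by omega)).le
      | (k+2) =>
        have h1 := ih k (by omega)
        have h2 := hq2 (n + k)
        have he : (k+2)/2 = k/2 + 1 := by omega
        have h3 : q (n + (k + 2)) = q (n + k + 2) := by ring_nf
        rw [he, h3, pow_succ]
        calc 2 ^ (k/2) * 2 * q n = 2 * (2 ^ (k/2) * q n) := by ring
        _ ≤ 2 * q (n + k) := by omega
        _ ≤ q (n + k + 2) := h2
  -- geometric comparison
  set r : ℝ := (Real.sqrt 2)⁻¹ with hrdef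
  have hs2 : (1:ℝ) < Real.sqrt 2 := by
    have : (1:ℝ) = Real.sqrt 1 := (Real.sqrt_one).symm
    rw [this]
    exact Real.sqrt_lt_sqrt (by norm_num) (by norm_num)
  have hr0 : 0 < r := inv_pos.mpr (by linarith)
  have hr1 : r < 1 := inv_lt_one_of_one_lt₀ hs2
  have hr2 : r ^ 2 = 2⁻¹ := by
    rw [hrdef, inv_pow, Real.sq_sqrt (by norm_num : (0:ℝ) ≤ 2)]
  have hgeo : ∀ n k, ((q (n+k):ℝ))⁻¹ ≤ ((q n:ℝ))⁻¹ * (Real.sqrt 2 * r ^ k) := by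
    intro n k
    have h1 : (2:ℝ)^(k/2) * (q n:ℝ) ≤ ((q (n+k):ℝ)) := by exact_mod_cast hgrow n k
    have hpos : (0:ℝ) < (2:ℝ)^(k/2) * (q n:ℝ) := mul_pos (by positivity) (hqR n)
    have h2 : ((q (n+k):ℝ))⁻¹ ≤ ((2:ℝ)^(k/2) * (q n:ℝ))⁻¹ := by
      apply inv_anti₀ hpos h1
    rw [mul_inv] at h2
    have h3 : ((2:ℝ)^(k/2))⁻¹ ≤ Real.sqrt 2 * r ^ k := by
      rw [← inv_pow]
      have e1 : (2:ℝ)⁻¹ ^ (k/2) = r ^ (2 * (k/2)) := by rw [pow_mul, hr2]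
      rw [e1]
      have hk : k - 1 ≤ 2 * (k/2) := by omega
      have h4 : r ^ (2*(k/2)) ≤ r ^ (k-1) := pow_le_pow_of_le_one hr0.le hr1.le hk
      have h5 : r ^ (k - 1) ≤ Real.sqrt 2 * r ^ k := by
        cases k with
        | zero => simpa using hs2.le
        | succ k =>
          simp only [Nat.succ_sub_one, pow_succ]
          have e2 : Real.sqrt 2 * (r^k * r) = r^k := by
            rw [hrdef]
            field_simp
          rw [e2]
      linarith
    calc ((q (n+k):ℝ))⁻¹ ≤ ((2:ℝ)^(k/2))⁻¹ * ((q n:ℝ))⁻¹ := h2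
      _ ≤ (Real.sqrt 2 * r^k) * ((q n:ℝ))⁻¹ :=
          mul_le_mul_of_nonneg_right h3 (hqinv_pos n).le
      _ = ((q n:ℝ))⁻¹ * (Real.sqrt 2 * r^k) := mul_comm _ _
  have hsq : ∀ n, Summable (fun k => ((q (n+k):ℝ))⁻¹) := by
    intro n
    apply Summable.of_nonneg_of_le (fun k => (hqinv_pos _).le) (hgeo n)
    exact (((summable_geometric_of_lt_one hr0.le hr1).mul_left _).mul_left _)
  have hSnn : ∀ n, 0 ≤ ∑' l, ((q (n+l):ℝ))⁻¹ := fun n =>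
    tsum_nonneg fun l => (hqinv_pos _).le
  have hfac1 : ∀ m, (1:ℝ) ≤ 1 + C * ((q m : ℝ))⁻¹ := fun m => by
    nlinarith [hqinv_pos m, hC]
  have hprod1 : ∀ n k, (1:ℝ) ≤ ∏ l ∈ range k, (1 + C * ((q (n+l):ℝ))⁻¹) := by
    intro n k
    calc (1:ℝ) = ∏ _l ∈ range k, (1:ℝ) := by simp
      _ ≤ ∏ l ∈ range k, (1 + C * ((q (n+l):ℝ))⁻¹) :=
        Finset.prod_le_prod (fun _ _ => zero_le_one) (fun l _ => hfac1 _)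
  have hprod_le : ∀ n k, ∏ l ∈ range k, (1 + C * ((q (n+l):ℝ))⁻¹)
      ≤ Real.exp (C * ∑' l, ((q (n+l):ℝ))⁻¹) := by
    intro n k
    calc ∏ l ∈ range k, (1 + C * ((q (n+l):ℝ))⁻¹)
        ≤ ∏ l ∈ range k, Real.exp (C * ((q (n+l):ℝ))⁻¹) :=
          Finset.prod_le_prod (fun l _ => by linarith [hfac1 (n+l)]) (fun l _ => by
            have := Real.add_one_le_exp (C * ((q (n+l):ℝ))⁻¹)
            linarith)
      _ = Real.exp (∑ l ∈ range k, C * ((q (n+l):ℝ))⁻¹) := (Real.exp_sum _ _).symm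
      _ ≤ Real.exp (C * ∑' l, ((q (n+l):ℝ))⁻¹) := by
          apply Real.exp_le_exp.mpr
          rw [← Finset.mul_sum]
          apply mul_le_mul_of_nonneg_left _ hC.le
          exact Summable.sum_le_tsum (range k) (fun l _ => (hqinv_pos _).le) (hsq n)
  have hsf : ∀ n, Summable (f n) := by
    intro n
    refine Summable.of_nonneg_of_le (fun k => ?_) (fun k => ?_)
      ((hsq n).mul_left (Real.exp (C * ∑' l, ((q (n+l):ℝ))⁻¹)))
    · exact mul_nonneg (hqinv_pos _).le (by linarith [hprod1 n k])
    · show ((q (n + k) : ℝ))⁻¹ * ∏ l ∈ range k, (1 + C * ((q (n + l) : ℝ))⁻¹) ≤ _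
      calc ((q (n + k) : ℝ))⁻¹ * ∏ l ∈ range k, (1 + C * ((q (n + l) : ℝ))⁻¹)
          ≤ ((q (n + k) : ℝ))⁻¹ * Real.exp (C * ∑' l, ((q (n+l):ℝ))⁻¹) :=
            mul_le_mul_of_nonneg_left (hprod_le n k) (hqinv_pos _).le
        _ = _ := mul_comm _ _
  -- iteration
  have hstep : ∀ n, d n ≤ C*(1+M) * ((q (n+1):ℝ))⁻¹ + (1 + C*((q (n+1):ℝ))⁻¹) * d (n+1) := by
    intro n
    have := hd_rec n
    nlinarith [hqinv_pos (n+1), hd_nonneg (n+1)]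
  have hiter : ∀ n m, d n ≤ C*(1+M) * ∑ k ∈ range m, f (n+1) k
      + (∏ l ∈ range m, (1 + C*((q (n+1+l):ℝ))⁻¹)) * d (n+m) := by
    intro n m
    induction m with
    | zero => simpa using le_refl (d n)
    | succ m ih =>
      have e2 : n + (m+1) = n + m + 1 := by omega
      rw [Finset.sum_range_succ, Finset.prod_range_succ, e2]
      have e : n + 1 + m = n + m + 1 := by omega
      have hfm : f (n+1) m
          = ((q (n+1+m):ℝ))⁻¹ * ∏ l ∈ range m, (1 + C*((q (n+1+l):ℝ))⁻¹) := rfl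
      rw [hfm, e]
      have hP1 : (1:ℝ) ≤ ∏ l ∈ range m, (1 + C*((q (n+1+l):ℝ))⁻¹) := hprod1 (n+1) m
      have hP0 : (0:ℝ) ≤ ∏ l ∈ range m, (1 + C*((q (n+1+l):ℝ))⁻¹) := by linarith
      have hs := hstep (n+m)
      have h3 : (∏ l ∈ range m, (1 + C*((q (n+1+l):ℝ))⁻¹)) * d (n+m)
          ≤ (∏ l ∈ range m, (1 + C*((q (n+1+l):ℝ))⁻¹)) *
            (C*(1+M) * ((q (n+m+1):ℝ))⁻¹ + (1 + C*((q (n+m+1):ℝ))⁻¹) * d (n+m+1)) :=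
        mul_le_mul_of_nonneg_left hs hP0
      nlinarith [ih, h3]
  -- limit
  have hmain : ∀ n, d n ≤ C*(1+M) * ∑' k, f (n+1) k := by
    intro n
    have htend1 : Tendsto (fun m => ∑ k ∈ range m, f (n+1) k) atTop
        (nhds (∑' k, f (n+1) k)) := (hsf (n+1)).hasSum.tendsto_sum_nat
    have hdtend : Tendsto (fun m => d (n+m)) atTop (nhds 0) := by
      have := hd_lim.comp (tendsto_add_atTop_nat n)
      simpa [Function.comp_def, Nat.add_comm] using this
    have hEd : Tendsto (fun m => Real.exp (C * ∑' l, ((q (n+1+l):ℝ))⁻¹) * d (n+m))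
        atTop (nhds 0) := by
      simpa using hdtend.const_mul (Real.exp (C * ∑' l, ((q (n+1+l):ℝ))⁻¹))
    have hPd : Tendsto (fun m => (∏ l ∈ range m, (1 + C*((q (n+1+l):ℝ))⁻¹)) * d (n+m))
        atTop (nhds 0) := by
      apply squeeze_zero (fun m => mul_nonneg (by linarith [hprod1 (n+1) m]) (hd_nonneg _))
        (fun m => mul_le_mul_of_nonneg_right (hprod_le (n+1) m) (hd_nonneg _)) hEd
    have hrhs : Tendsto (fun m => C*(1+M) * ∑ k ∈ range m, f (n+1) k
        + (∏ l ∈ range m, (1 + C*((q (n+1+l):ℝ))⁻¹)) * d (n+m)) atTop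
        (nhds (C*(1+M) * ∑' k, f (n+1) k + 0)) := (htend1.const_mul _).add hPd
    rw [add_zero] at hrhs
    exact ge_of_tendsto' hrhs (fun m => hiter n m)
  have htshift : ∀ n, ∑' k, f (n+1) k ≤ ∑' k, f n k := by
    intro n
    have h1 : ∀ k, f (n+1) k ≤ f n (k+1) := by
      intro k
      have e : n + (k+1) = n + 1 + k := by omega
      show ((q (n+1+k):ℝ))⁻¹ * ∏ l ∈ range k, (1 + C*((q (n+1+l):ℝ))⁻¹)
        ≤ ((q (n+(k+1)):ℝ))⁻¹ * ∏ l ∈ range (k+1), (1 + C*((q (n+l):ℝ))⁻¹)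
      rw [e, Finset.prod_range_succ']
      have ep : ∏ l ∈ range k, (1 + C*((q (n+(l+1)):ℝ))⁻¹)
          = ∏ l ∈ range k, (1 + C*((q (n+1+l):ℝ))⁻¹) :=
        Finset.prod_congr rfl (fun l _ => by rw [show n+(l+1) = n+1+l from by omega])
      rw [ep]
      have h0 : (0:ℝ) ≤ ((q (n + 1 + k):ℝ))⁻¹ * ∏ l ∈ range k, (1 + C * ((q (n + 1 + l):ℝ))⁻¹) :=
        mul_nonneg (hqinv_pos _).le (by linarith [hprod1 (n+1) k])
      nlinarith [mul_le_mul_of_nonneg_left (hfac1 (n+0)) h0]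
    have h2 : Summable (fun k => f n (k+1)) := (summable_nat_add_iff 1).mpr (hsf n)
    have h3 : ∑' k, f (n+1) k ≤ ∑' k, f n (k+1) := Summable.tsum_le_tsum h1 (hsf (n+1)) h2
    have h4 : ∑' k, f n k = f n 0 + ∑' k, f n (k+1) := Summable.tsum_eq_zero_add (hsf n)
    have h5 : (0:ℝ) ≤ f n 0 := mul_nonneg (hqinv_pos _).le (by linarith [hprod1 n 0])
    linarith
  intro n
  refine ⟨hsf n, ?_⟩
  calc d n ≤ C*(1+M) * ∑' k, f (n+1) k := hmain n
    _ ≤ C*(1+M) * ∑' k, f n k :=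
      mul_le_mul_of_nonneg_left (htshift n) (by positivity)
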